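/- The expected value E(n) = (1/n!) Σ_{w ∈ S_n} is(w) of the length of the longest increasing subsequence of a uniformly random permutation of {1,…,n} satisfies E(n) ≥ √n. -/
import Mathlib


open scoped Classical in
/-- The length of the longest increasing subsequence of the permutation `w` of `{1,…,n}`. -/
noncomputable def isLen (n : ℕ) (w : Equiv.Perm (Fin n)) : ℕ :=
  Finset.sup ((Finset.univ : Finset (Fin n)).powerset.filter
    fun s : Finset (Fin n) => StrictMonoOn w ↑s) Finset.card

open scoped Classical

/-- The length of the longest decreasing subsequence. -/
noncomputable def dsLen (n : ℕ) (w : Equiv.Perm (Fin n)) : ℕ :=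
  Finset.sup ((Finset.univ : Finset (Fin n)).powerset.filter
    fun s : Finset (Fin n) => StrictAntiOn w ↑s) Finset.card

/-- Longest increasing subsequence ending exactly at `i`. -/
noncomputable def incEnd (n : ℕ) (w : Equiv.Perm (Fin n)) (i : Fin n) : ℕ :=
  Finset.sup ((Finset.univ : Finset (Fin n)).powerset.filter
    fun s : Finset (Fin n) => (StrictMonoOn w ↑s ∧ i ∈ s) ∧ ∀ j ∈ s, j ≤ i) Finset.card

/-- Longest decreasing subsequence ending exactly at `i`. -/
noncomputable def decEnd (n : ℕ) (w : Equiv.Perm (Fin n)) (i : Fin n) : ℕ :=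
  Finset.sup ((Finset.univ : Finset (Fin n)).powerset.filter
    fun s : Finset (Fin n) => (StrictAntiOn w ↑s ∧ i ∈ s) ∧ ∀ j ∈ s, j ≤ i) Finset.card

lemma singleton_mem_inc (n : ℕ) (w : Equiv.Perm (Fin n)) (i : Fin n) :
    ({i} : Finset (Fin n)) ∈ (Finset.univ : Finset (Fin n)).powerset.filter
      (fun s : Finset (Fin n) => (StrictMonoOn w ↑s ∧ i ∈ s) ∧ ∀ j ∈ s, j ≤ i) := by
  simp only [Finset.mem_filter, Finset.mem_powerset, Finset.subset_univ, true_and,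
    Finset.mem_singleton]
  refine ⟨⟨?_, trivial⟩, fun j hj => by simp_all⟩
  intro a ha b hb hab
  simp only [Finset.coe_singleton, Set.mem_singleton_iff] at ha hb
  subst ha; subst hb; exact absurd hab (lt_irrefl _)

lemma singleton_mem_dec (n : ℕ) (w : Equiv.Perm (Fin n)) (i : Fin n) :
    ({i} : Finset (Fin n)) ∈ (Finset.univ : Finset (Fin n)).powerset.filter
      (fun s : Finset (Fin n) => (StrictAntiOn w ↑s ∧ i ∈ s) ∧ ∀ j ∈ s, j ≤ i) := by
  simp only [Finset.mem_filter, Finset.mem_powerset, Finset.subset_univ, true_and,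
    Finset.mem_singleton]
  refine ⟨⟨?_, trivial⟩, fun j hj => by simp_all⟩
  intro a ha b hb hab
  simp only [Finset.coe_singleton, Set.mem_singleton_iff] at ha hb
  subst ha; subst hb; exact absurd hab (lt_irrefl _)

lemma one_le_incEnd (n : ℕ) (w : Equiv.Perm (Fin n)) (i : Fin n) : 1 ≤ incEnd n w i := by
  have := Finset.le_sup (f := Finset.card) (singleton_mem_inc n w i)
  simpa [incEnd] using this

lemma one_le_decEnd (n : ℕ) (w : Equiv.Perm (Fin n)) (i : Fin n) : 1 ≤ decEnd n w i := by
  have := Finset.le_sup (f := Finset.card) (singleton_mem_dec n w i)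
  simpa [decEnd] using this

lemma incEnd_le_isLen (n : ℕ) (w : Equiv.Perm (Fin n)) (i : Fin n) :
    incEnd n w i ≤ isLen n w := by
  apply Finset.sup_le
  intro s hs
  simp only [Finset.mem_filter, Finset.mem_powerset] at hs
  exact Finset.le_sup (f := Finset.card)
    (by simp only [Finset.mem_filter, Finset.mem_powerset]; exact ⟨hs.1, hs.2.1.1⟩)

lemma decEnd_le_dsLen (n : ℕ) (w : Equiv.Perm (Fin n)) (i : Fin n) :
    decEnd n w i ≤ dsLen n w := by
  apply Finset.sup_le
  intro s hs
  simp only [Finset.mem_filter, Finset.mem_powerset] at hs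
  exact Finset.le_sup (f := Finset.card)
    (by simp only [Finset.mem_filter, Finset.mem_powerset]; exact ⟨hs.1, hs.2.1.1⟩)

lemma incEnd_lt_incEnd (n : ℕ) (w : Equiv.Perm (Fin n)) {i j : Fin n}
    (hij : i < j) (hw : w i < w j) : incEnd n w i < incEnd n w j := by
  obtain ⟨s, hs, hcard⟩ := Finset.exists_mem_eq_sup _ ⟨_, singleton_mem_inc n w i⟩ Finset.card
  simp only [Finset.mem_filter, Finset.mem_powerset] at hs
  obtain ⟨-, ⟨hmono, hi⟩, hub⟩ := hs
  have hjs : j ∉ s := fun h => absurd (hub j h) (not_le.mpr hij)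
  have hmem : insert j s ∈ (Finset.univ : Finset (Fin n)).powerset.filter
      (fun s : Finset (Fin n) => (StrictMonoOn w ↑s ∧ j ∈ s) ∧ ∀ k ∈ s, k ≤ j) := by
    simp only [Finset.mem_filter, Finset.mem_powerset, Finset.subset_univ, true_and,
      Finset.mem_insert]
    refine ⟨⟨?_, Or.inl trivial⟩, ?_⟩
    · intro a ha b hb hab
      simp only [Finset.coe_insert, Set.mem_insert_iff, Finset.mem_coe] at ha hb
      rcases ha with rfl | ha
      · rcases hb with rfl | hb
        · exact absurd hab (lt_irrefl _)
        · exact absurd (lt_of_lt_of_le hab (le_trans (hub b hb) hij.le)) (lt_irrefl _)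
      · rcases hb with rfl | hb
        · rcases eq_or_lt_of_le (hub a ha) with rfl | hai
          · exact hw
          · exact lt_trans (hmono ha hi hai) hw
        · exact hmono ha hb hab
    · rintro k (rfl | hk)
      · exact le_refl _
      · exact le_trans (hub k hk) hij.le
  have hle := Finset.le_sup (f := Finset.card) hmem
  rw [Finset.card_insert_of_notMem hjs] at hle
  calc incEnd n w i = s.card := hcard
    _ < s.card + 1 := Nat.lt_succ_self _
    _ ≤ incEnd n w j := hle

lemma decEnd_lt_decEnd (n : ℕ) (w : Equiv.Perm (Fin n)) {i j : Fin n}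
    (hij : i < j) (hw : w j < w i) : decEnd n w i < decEnd n w j := by
  obtain ⟨s, hs, hcard⟩ := Finset.exists_mem_eq_sup _ ⟨_, singleton_mem_dec n w i⟩ Finset.card
  simp only [Finset.mem_filter, Finset.mem_powerset] at hs
  obtain ⟨-, ⟨hanti, hi⟩, hub⟩ := hs
  have hjs : j ∉ s := fun h => absurd (hub j h) (not_le.mpr hij)
  have hmem : insert j s ∈ (Finset.univ : Finset (Fin n)).powerset.filter
      (fun s : Finset (Fin n) => (StrictAntiOn w ↑s ∧ j ∈ s) ∧ ∀ k ∈ s, k ≤ j) := by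
    simp only [Finset.mem_filter, Finset.mem_powerset, Finset.subset_univ, true_and,
      Finset.mem_insert]
    refine ⟨⟨?_, Or.inl trivial⟩, ?_⟩
    · intro a ha b hb hab
      simp only [Finset.coe_insert, Set.mem_insert_iff, Finset.mem_coe] at ha hb
      rcases ha with rfl | ha
      · rcases hb with rfl | hb
        · exact absurd hab (lt_irrefl _)
        · exact absurd (lt_of_lt_of_le hab (le_trans (hub b hb) hij.le)) (lt_irrefl _)
      · rcases hb with rfl | hb
        · rcases eq_or_lt_of_le (hub a ha) with rfl | hai
          · exact hw
          · exact lt_trans hw (hanti ha hi hai)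
        · exact hanti ha hb hab
    · rintro k (rfl | hk)
      · exact le_refl _
      · exact le_trans (hub k hk) hij.le
  have hle := Finset.le_sup (f := Finset.card) hmem
  rw [Finset.card_insert_of_notMem hjs] at hle
  calc decEnd n w i = s.card := hcard
    _ < s.card + 1 := Nat.lt_succ_self _
    _ ≤ decEnd n w j := hle

/-- Erdős–Szekeres-type bound. -/
lemma n_le_isLen_mul_dsLen (n : ℕ) (w : Equiv.Perm (Fin n)) :
    n ≤ isLen n w * dsLen n w := by
  have hmaps : ∀ i : Fin n, (incEnd n w i, decEnd n w i) ∈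
      Finset.Icc 1 (isLen n w) ×ˢ Finset.Icc 1 (dsLen n w) := by
    intro i
    simp only [Finset.mem_product, Finset.mem_Icc]
    exact ⟨⟨one_le_incEnd n w i, incEnd_le_isLen n w i⟩,
      ⟨one_le_decEnd n w i, decEnd_le_dsLen n w i⟩⟩
  have hinj : Set.InjOn (fun i => (incEnd n w i, decEnd n w i))
      ↑(Finset.univ : Finset (Fin n)) := by
    intro i _ j _ hEq
    by_contra hne
    have key : ∀ a b : Fin n, a < b →
        (incEnd n w a, decEnd n w a) ≠ (incEnd n w b, decEnd n w b) := by
      intro a b hab hEq'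
      rcases lt_or_gt_of_ne (fun h : w a = w b => absurd (w.injective h) (ne_of_lt hab)) with
        h | h
      · exact absurd (congrArg Prod.fst hEq')
          (ne_of_lt (incEnd_lt_incEnd n w hab h))
      · exact absurd (congrArg Prod.snd hEq')
          (ne_of_lt (decEnd_lt_decEnd n w hab h))
    rcases lt_or_gt_of_ne hne with h | h
    · exact key i j h hEq
    · exact key j i h hEq.symm
  have hcard := Finset.card_le_card_of_injOn _ (fun i _ => hmaps i) hinj
  simpa [Nat.card_Icc] using hcard

lemma dsLen_eq (n : ℕ) (w : Equiv.Perm (Fin n)) :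
    dsLen n w = isLen n (Fin.revPerm * w) := by
  unfold dsLen isLen
  congr 1
  apply Finset.filter_congr
  intro s _
  constructor
  · intro h a ha b hb hab
    simp only [Equiv.Perm.mul_apply, Fin.revPerm_apply]
    exact Fin.rev_lt_rev.mpr (h ha hb hab)
  · intro h a ha b hb hab
    have := h ha hb hab
    simp only [Equiv.Perm.mul_apply, Fin.revPerm_apply, Fin.rev_lt_rev] at this
    exact this

/-- The expected length of the longest increasing subsequence of a uniformly random
permutation of `{1,…,n}` is at least `√n`. -/
theorem expectation_isLen_ge_sqrt (n : ℕ) :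
    Real.sqrt n ≤ (∑ w : Equiv.Perm (Fin n), (isLen n w : ℝ)) / (n.factorial : ℝ) := by
  have hfact : (0 : ℝ) < (n.factorial : ℝ) := by exact_mod_cast n.factorial_pos
  rw [le_div_iff₀ hfact]
  have hsum_ds : ∑ w : Equiv.Perm (Fin n), (dsLen n w : ℝ)
      = ∑ w : Equiv.Perm (Fin n), (isLen n w : ℝ) := by
    have : ∑ w : Equiv.Perm (Fin n), (isLen n (Fin.revPerm * w) : ℝ)
        = ∑ w : Equiv.Perm (Fin n), (isLen n w : ℝ) :=
      Equiv.sum_comp (Equiv.mulLeft (Fin.revPerm : Equiv.Perm (Fin n)))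
        (fun w => (isLen n w : ℝ))
    simpa [dsLen_eq] using this
  have amgm : ∀ w : Equiv.Perm (Fin n),
      2 * Real.sqrt n ≤ (isLen n w : ℝ) + (dsLen n w : ℝ) := by
    intro w
    have h1 : Real.sqrt n ≤ Real.sqrt ((isLen n w : ℝ) * (dsLen n w : ℝ)) := by
      apply Real.sqrt_le_sqrt
      exact_mod_cast n_le_isLen_mul_dsLen n w
    rw [Real.sqrt_mul (by positivity)] at h1
    have h2 := Real.sq_sqrt (show (0:ℝ) ≤ (isLen n w : ℝ) by positivity)
    have h3 := Real.sq_sqrt (show (0:ℝ) ≤ (dsLen n w : ℝ) by positivity)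
    nlinarith [sq_nonneg (Real.sqrt (isLen n w : ℝ) - Real.sqrt (dsLen n w : ℝ))]
  have hbig : (n.factorial : ℝ) * (2 * Real.sqrt n)
      ≤ ∑ w : Equiv.Perm (Fin n), ((isLen n w : ℝ) + (dsLen n w : ℝ)) := by
    have hcard : (Finset.univ : Finset (Equiv.Perm (Fin n))).card = n.factorial := by
      simp [Fintype.card_perm]
    calc (n.factorial : ℝ) * (2 * Real.sqrt n)
        = ∑ _w : Equiv.Perm (Fin n), 2 * Real.sqrt n := by
          rw [Finset.sum_const, hcard]; ring
      _ ≤ _ := Finset.sum_le_sum (fun w _ => amgm w)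
  rw [Finset.sum_add_distrib, hsum_ds] at hbig
  linarith
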